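/- Let λ(n) be a sequence of partitions such that for each i the limits α_i = lim_n λ(n)_i / n and β_i = lim_n (λ(n))'_i / n exist and are finite, and δ = lim_n |λ(n)|/n exists and is finite. Then Σ_{i=1}^∞ (α_i + β_i) ≤ δ. -/

import Mathlib

open Filter

lemma key_count (lam : ℕ → ℕ) (n N : ℕ) :
    (∑ i ∈ Finset.range N, ((Finset.range n).filter (fun k => i + 1 ≤ lam k)).card)
      = ∑ k ∈ Finset.range n, min (lam k) N := by
  simp only [Finset.card_filter]
  rw [Finset.sum_comm]
  refine Finset.sum_congr rfl fun k _ => ?_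
  rw [← Finset.card_filter]
  have : (Finset.range N).filter (fun i => i + 1 ≤ lam k) = Finset.range (min (lam k) N) := by
    ext a
    simp only [Finset.mem_filter, Finset.mem_range, Nat.lt_min]
    omega
  rw [this, Finset.card_range]

lemma key (lam : ℕ → ℕ) (n : ℕ) (hlen : ∀ i, n ≤ i → lam i = 0) (N : ℕ) :
    (∑ i ∈ Finset.range N, lam i) +
      (∑ i ∈ Finset.range N, ((Finset.range n).filter (fun k => i + 1 ≤ lam k)).card)
    ≤ (∑ i ∈ Finset.range n, lam i) + N * N := by
  rw [key_count]
  set M := min N n with hM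
  have h1 : (∑ i ∈ Finset.range N, lam i) = ∑ i ∈ Finset.range M, lam i := by
    refine (Finset.sum_subset (Finset.range_subset_range.2 (min_le_left _ _)) ?_).symm
    intro i hi hni
    simp only [Finset.mem_range] at hi hni
    exact hlen i (by omega)
  have h2 : Finset.range n = Finset.range M ∪ Finset.Ico M n := by
    rw [Finset.range_eq_Ico, Finset.range_eq_Ico]
    exact (Finset.Ico_union_Ico_eq_Ico (Nat.zero_le _) (min_le_right _ _)).symm
  have hdisj : Disjoint (Finset.range M) (Finset.Ico M n) := by
    rw [Finset.range_eq_Ico]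
    exact Finset.Ico_disjoint_Ico_consecutive 0 M n
  rw [h1, h2, Finset.sum_union hdisj, Finset.sum_union hdisj]
  have b1 : ∑ k ∈ Finset.range M, min (lam k) N ≤ N * N := by
    calc ∑ k ∈ Finset.range M, min (lam k) N ≤ ∑ k ∈ Finset.range M, N :=
          Finset.sum_le_sum fun k _ => min_le_right _ _
      _ = M * N := by simp [Nat.mul_comm]
      _ ≤ N * N := Nat.mul_le_mul_right _ (min_le_left _ _)
  have b2 : ∑ k ∈ Finset.Ico M n, min (lam k) N ≤ ∑ k ∈ Finset.Ico M n, lam k :=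
    Finset.sum_le_sum fun k _ => min_le_left _ _
  omega

/-- Vershik–Kerov parameters: if `λ(n)` is a sequence of partitions (with at most `n`
parts) such that `α_i = lim λ(n)_i/n`, `β_i = lim λ(n)'_i/n` and `δ = lim |λ(n)|/n`
all exist and are finite, then `Σ (α_i + β_i)` converges and is at most `δ`. -/
theorem stmt1 (lam : ℕ → ℕ → ℕ) (hmono : ∀ n, Antitone (lam n))
    (hlen : ∀ n i, n ≤ i → lam n i = 0)
    (α β : ℕ → ℝ) (δ : ℝ)
    (hα : ∀ i, Tendsto (fun n => (lam n i : ℝ) / n) atTop (nhds (α i)))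
    (hβ : ∀ i, Tendsto
      (fun n => ((((Finset.range n).filter (fun k => i + 1 ≤ lam n k)).card : ℝ)) / n)
      atTop (nhds (β i)))
    (hδ : Tendsto (fun n => (∑ i ∈ Finset.range n, (lam n i : ℝ)) / n) atTop (nhds δ)) :
    Summable (fun i => α i + β i) ∧ ∑' i, (α i + β i) ≤ δ := by
  have hnonneg : ∀ i, 0 ≤ α i + β i := by
    intro i
    have h1 : 0 ≤ α i := ge_of_tendsto' (hα i) (fun n => by positivity)
    have h2 : 0 ≤ β i := ge_of_tendsto' (hβ i) (fun n => by positivity)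
    linarith
  have hbound : ∀ N, ∑ i ∈ Finset.range N, (α i + β i) ≤ δ := by
    intro N
    have h1 : Tendsto (fun n => ∑ i ∈ Finset.range N,
        ((lam n i : ℝ) / n + (((Finset.range n).filter (fun k => i + 1 ≤ lam n k)).card : ℝ) / n))
        atTop (nhds (∑ i ∈ Finset.range N, (α i + β i))) :=
      tendsto_finset_sum _ fun i _ => (hα i).add (hβ i)
    have h2 : Tendsto (fun n : ℕ => (∑ i ∈ Finset.range n, (lam n i : ℝ)) / n + (N * N : ℝ) / n)
        atTop (nhds (δ + 0)) :=
      hδ.add (tendsto_const_nhds.div_atTop tendsto_natCast_atTop_atTop)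
    rw [add_zero] at h2
    refine le_of_tendsto_of_tendsto' h1 h2 ?_
    intro n
    rcases Nat.eq_zero_or_pos n with rfl | hn
    · simp
    have hn' : (0:ℝ) < n := by exact_mod_cast hn
    have hkey := key (lam n) n (hlen n) N
    have hkeyR : (∑ i ∈ Finset.range N, (lam n i : ℝ)) +
        (∑ i ∈ Finset.range N, (((Finset.range n).filter (fun k => i + 1 ≤ lam n k)).card : ℝ))
        ≤ (∑ i ∈ Finset.range n, (lam n i : ℝ)) + (N : ℝ) * N := by
      exact_mod_cast hkey
    calc ∑ i ∈ Finset.range N,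
          ((lam n i : ℝ) / n + (((Finset.range n).filter (fun k => i + 1 ≤ lam n k)).card : ℝ) / n)
        = ((∑ i ∈ Finset.range N, (lam n i : ℝ)) +
            (∑ i ∈ Finset.range N, (((Finset.range n).filter (fun k => i + 1 ≤ lam n k)).card : ℝ))) / n := by
          rw [Finset.sum_add_distrib, ← Finset.sum_div, ← Finset.sum_div, ← add_div]
      _ ≤ ((∑ i ∈ Finset.range n, (lam n i : ℝ)) + (N : ℝ) * N) / n :=
          by gcongr
      _ = (∑ i ∈ Finset.range n, (lam n i : ℝ)) / n + (N * N : ℝ) / n := by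
          push_cast; ring
  exact ⟨summable_of_sum_range_le hnonneg hbound, Summable.tsum_le_of_sum_range_le (summable_of_sum_range_le hnonneg hbound) hbound⟩
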